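/- arXiv:1501.07476 — 2 statements merged into one kernel-verified Lean document; each statement's English description precedes it below -/
import Mathlib

section
/- If every solution of the recurrence Vᵢ = aᵢVᵢ₋₁ − Vᵢ₋₂ with n-periodic coefficients aᵢ is n-antiperiodic (Vᵢ₊ₙ = −Vᵢ), then the continuants satisfy K(aᵢ,…,aᵢ₊ₙ₋₃) = 1 and K(aᵢ,…,aᵢ₊ₙ₋₂) = 0 for all i. -/
/-- Reversed continuant: `contRev [aₙ, …, a₁] = K(a₁,…,aₙ)`. -/
def contRev {R : Type*} [CommRing R] : List R → R
  | [] => 1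
  | [a] => a
  | a :: b :: t => a * contRev (b :: t) - contRev t

/-- The classical continuant `K(a₁,…,aₙ)`. -/
def continuant {R : Type*} [CommRing R] (l : List R) : R := contRev l.reverse

section Aux

variable {F : Type*} [Field F]

lemma continuant_append (l : List F) (x y : F) :
    continuant (l ++ [x, y]) = y * continuant (l ++ [x]) - continuant l := by
  have h1 : (l ++ [x, y]).reverse = y :: x :: l.reverse := by simp
  have h2 : (l ++ [x]).reverse = x :: l.reverse := by simp
  simp only [continuant, h1, h2, contRev]

/-- Forward solution: `fwd a i k = V (i - 2 + k)` with `V (i-2) = 0`, `V (i-1) = 1`. -/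
noncomputable def fwd (a : ℤ → F) (i : ℤ) : ℕ → F
  | 0 => 0
  | 1 => 1
  | (k+2) => a (i + k) * fwd a i (k+1) - fwd a i k

/-- Backward solution: `bwd a i k = V (i - 2 - k)`. -/
noncomputable def bwd (a : ℤ → F) (i : ℤ) : ℕ → F
  | 0 => 0
  | 1 => -1
  | (k+2) => a (i - 2 - k) * bwd a i (k+1) - bwd a i k

noncomputable def Vfun (a : ℤ → F) (i : ℤ) (j : ℤ) : F :=
  if i - 2 ≤ j then fwd a i (j - (i - 2)).toNat else bwd a i ((i - 2) - j).toNat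

lemma Vfun_fwd (a : ℤ → F) (i : ℤ) (k : ℕ) : Vfun a i (i - 2 + k) = fwd a i k := by
  have h : i - 2 ≤ i - 2 + k := by omega
  rw [Vfun, if_pos h]
  congr 1
  omega

lemma Vfun_bwd (a : ℤ → F) (i : ℤ) (k : ℕ) : Vfun a i (i - 2 - k) = bwd a i k := by
  rcases Nat.eq_zero_or_pos k with hk | hk
  · subst hk
    simpa [fwd, bwd] using Vfun_fwd a i 0
  · rw [Vfun, if_neg (by omega)]
    congr 1
    omega

lemma Vfun_rec (a : ℤ → F) (i : ℤ) :
    ∀ j, Vfun a i j = a j * Vfun a i (j - 1) - Vfun a i (j - 2) := by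
  intro j
  rcases le_or_gt i j with hj | hj
  · -- j = i - 2 + (k+2)
    obtain ⟨k, hk⟩ : ∃ k : ℕ, j = i - 2 + (k + 2 : ℕ) := ⟨(j - i).toNat, by omega⟩
    have e1 : j - 1 = i - 2 + ((k + 1 : ℕ) : ℤ) := by push_cast [hk]; ring
    have e2 : j - 2 = i - 2 + (k : ℕ) := by push_cast [hk]; ring
    rw [e1, e2, hk, Vfun_fwd, Vfun_fwd, Vfun_fwd]
    rw [show fwd a i (k + 2) = a (i + k) * fwd a i (k+1) - fwd a i k from rfl,
      show i - 2 + ((k + 2 : ℕ) : ℤ) = i + (k : ℕ) by push_cast; ring]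
  rcases eq_or_lt_of_le (by omega : j ≤ i - 1) with hj1 | hj1
  · -- j = i - 1
    have e0 : j = i - 2 + ((1 : ℕ) : ℤ) := by omega
    have e1 : j - 1 = i - 2 + ((0 : ℕ) : ℤ) := by omega
    have e2 : j - 2 = i - 2 - ((1 : ℕ) : ℤ) := by omega
    rw [e1, e2, e0, Vfun_fwd, Vfun_fwd, Vfun_bwd]
    simp [fwd, bwd]
  rcases eq_or_lt_of_le (by omega : j ≤ i - 2) with hj2 | hj2
  · -- j = i - 2
    have e0 : j = i - 2 + ((0 : ℕ) : ℤ) := by omega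
    have e1 : j - 1 = i - 2 - ((1 : ℕ) : ℤ) := by omega
    have e2 : j - 2 = i - 2 - ((2 : ℕ) : ℤ) := by omega
    rw [e1, e2, e0, Vfun_fwd, Vfun_bwd, Vfun_bwd]
    have : bwd a i 2 = a (i - 2 - (0:ℕ)) * bwd a i 1 - bwd a i 0 := rfl
    rw [this]
    simp [fwd, bwd]
  · -- j ≤ i - 3, j = i - 2 - m, m ≥ 1
    obtain ⟨m, hm⟩ : ∃ m : ℕ, j = i - 2 - m := ⟨(i - 2 - j).toNat, by omega⟩
    have e1 : j - 1 = i - 2 - ((m + 1 : ℕ) : ℤ) := by push_cast [hm]; ring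
    have e2 : j - 2 = i - 2 - ((m + 2 : ℕ) : ℤ) := by push_cast [hm]; ring
    rw [e1, e2, hm, Vfun_bwd, Vfun_bwd, Vfun_bwd]
    rw [show bwd a i (m + 2) = a (i - 2 - m) * bwd a i (m+1) - bwd a i m from rfl]
    rw [show i - 2 - (m:ℤ) = i - 2 - (m:ℕ) from rfl]
    ring

lemma cont_eq_fwd (a : ℤ → F) (i : ℤ) :
    ∀ m : ℕ, continuant (List.ofFn fun k : Fin m => a (i + (k : ℕ))) = fwd a i (m + 1) := by
  have key : ∀ m : ℕ,
      continuant (List.ofFn fun k : Fin m => a (i + (k : ℕ))) = fwd a i (m + 1) ∧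
      continuant (List.ofFn fun k : Fin (m+1) => a (i + (k : ℕ))) = fwd a i (m + 2) := by
    intro m
    induction m with
    | zero =>
      constructor
      · simp [continuant, contRev, fwd]
      · simp [continuant, contRev, fwd, List.ofFn_succ]
    | succ m ih =>
      refine ⟨ih.2, ?_⟩
      have split : (List.ofFn fun k : Fin (m+2) => a (i + (k : ℕ))) =
          (List.ofFn fun k : Fin m => a (i + (k : ℕ))) ++ [a (i + m), a (i + (m+1))] := by
        rw [List.ofFn_succ' (n := m + 1), List.ofFn_succ' (n := m)]
        simp [List.concat_eq_append]
      rw [split, continuant_append]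
      have split1 : (List.ofFn fun k : Fin (m+1) => a (i + (k : ℕ))) =
          (List.ofFn fun k : Fin m => a (i + (k : ℕ))) ++ [a (i + m)] := by
        rw [List.ofFn_succ' (n := m)]
        simp [List.concat_eq_append]
      rw [← split1, ih.2, ih.1]
      rw [show fwd a i (m + 3) = a (i + (m+1:ℕ)) * fwd a i (m+2) - fwd a i (m+1) from rfl]
      push_cast
      ring
  exact fun m => (key m).1

end Aux

theorem stmt2 {F : Type*} [Field F] (n : ℕ) (hn : 3 ≤ n) (a : ℤ → F)
    (hper : ∀ i, a (i + n) = a i)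
    (hanti : ∀ V : ℤ → F,
      (∀ i, V i = a i * V (i - 1) - V (i - 2)) → ∀ i, V (i + n) = -V i) :
    ∀ i : ℤ,
      continuant (List.ofFn fun k : Fin (n - 2) => a (i + (k : ℕ))) = 1 ∧
      continuant (List.ofFn fun k : Fin (n - 1) => a (i + (k : ℕ))) = 0 := by
  intro i
  set V := Vfun a i with hV
  have hrec := Vfun_rec a i
  have hA := hanti (Vfun a i) hrec
  constructor
  · rw [cont_eq_fwd]
    have h1 : fwd a i (n - 2 + 1) = Vfun a i (i - 2 + ((n - 1 : ℕ) : ℤ)) := by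
      rw [Vfun_fwd]; congr 1; omega
    have h2 : i - 2 + ((n - 1 : ℕ) : ℤ) = (i - 3) + n := by omega
    have h3 : Vfun a i ((i - 3) + n) = - Vfun a i (i - 3) := hA (i - 3)
    have h4 : Vfun a i (i - 3) = bwd a i 1 := by
      rw [show i - 3 = i - 2 - ((1:ℕ):ℤ) by omega, Vfun_bwd]
    rw [h1, h2, h3, h4]
    simp [bwd]
  · rw [cont_eq_fwd]
    have h1 : fwd a i (n - 1 + 1) = Vfun a i (i - 2 + (n : ℤ)) := by
      rw [show (n:ℤ) = ((n : ℕ) : ℤ) from rfl]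
      rw [Vfun_fwd]; congr 1; omega
    have h2 : i - 2 + (n : ℤ) = (i - 2) + n := by ring
    have h3 : Vfun a i ((i - 2) + n) = - Vfun a i (i - 2) := hA (i - 2)
    have h4 : Vfun a i (i - 2) = fwd a i 0 := by
      simpa using Vfun_fwd a i 0
    rw [h1, h2, h3, h4]
    simp [fwd]
end

section
/- If the monodromy matrix Mᵢ of a supersymmetric Hill equation equals diag(−1,−1,1) for one index i, then Mⱼ = diag(−1,−1,1) for all j ∈ ℤ. -/
theorem stmt6 {R : Type*} [Ring R] (n : ℕ) (hn : 0 < n) (a β : ℤ → R)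
    (ha : ∀ i (x : R), a i * x = x * a i)
    (hββ : ∀ i j, β i * β j = -(β j * β i))
    (hβsq : ∀ i, β i * β i = 0)
    (hβa : ∀ i j, β i * a j = a j * β i)
    (haper : ∀ i, a (i + n) = a i)
    (hβper : ∀ i, β (i + n) = -β i)
    (A : ℤ → Matrix (Fin 3) (Fin 3) R)
    (hA : ∀ i, A i = !![0, 1, 0; -1, a i, -β i; 0, β i, 1])
    (M : ℤ → Matrix (Fin 3) (Fin 3) R)
    (hM : ∀ i, M i = (List.ofFn fun k : Fin n => A (i + (n : ℤ) - 1 - (k : ℕ))).prod)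
    (i₀ : ℤ) (h : M i₀ = !![-1, 0, 0; 0, -1, 0; 0, 0, 1]) :
    ∀ j : ℤ, M j = !![-1, 0, 0; 0, -1, 0; 0, 0, 1] := by
  have hAB : ∀ i : ℤ, A i * !![a i, -1, -β i; 1, 0, 0; -β i, 0, 1] = 1 := by
    intro i
    rw [hA]
    ext r c
    fin_cases r <;> fin_cases c <;>
      simp [Matrix.mul_apply, Fin.sum_univ_three, hβsq, hβa, Matrix.one_apply,
        Matrix.vecHead, Matrix.vecTail, Function.comp]
  have hBA : ∀ i : ℤ, (!![a i, -1, -β i; 1, 0, 0; -β i, 0, 1] : Matrix (Fin 3) (Fin 3) R)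
      * A i = 1 := by
    intro i
    rw [hA]
    ext r c
    fin_cases r <;> fin_cases c <;>
      simp [Matrix.mul_apply, Fin.sum_univ_three, hβsq, hβa, Matrix.one_apply,
        Matrix.vecHead, Matrix.vecTail, Function.comp]
  have hAD : ∀ i : ℤ, A (i + n) * !![(-1 : R), 0, 0; 0, -1, 0; 0, 0, 1]
      = !![(-1 : R), 0, 0; 0, -1, 0; 0, 0, 1] * A i := by
    intro i
    rw [hA, hA, haper, hβper]
    ext r c
    fin_cases r <;> fin_cases c <;>
      simp [Matrix.mul_apply, Fin.sum_univ_three,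
        Matrix.vecHead, Matrix.vecTail, Function.comp]
  -- key step : M (i+1) * A i = A (i + n) * M i
  have hstep : ∀ i : ℤ, M (i + 1) * A i = A (i + n) * M i := by
    intro i
    have h1 : (List.ofFn fun k : Fin (n + 1) => A (i + (n : ℤ) - (k : ℕ))).prod
        = A (i + n) * M i := by
      rw [List.ofFn_succ, List.prod_cons, hM]
      have hfun : (fun k : Fin n => A (i + (n : ℤ) - ((k.succ : Fin (n + 1)) : ℕ)))
          = fun k : Fin n => A (i + (n : ℤ) - 1 - (k : ℕ)) := by
        funext k
        congr 1
        push_cast [Fin.val_succ]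
        ring
      rw [hfun]
      congr 2
      push_cast [Fin.val_zero]
      ring
    have h2 : (List.ofFn fun k : Fin (n + 1) => A (i + (n : ℤ) - (k : ℕ))).prod
        = M (i + 1) * A i := by
      rw [List.ofFn_succ', List.concat_eq_append, List.prod_append, List.prod_cons,
        List.prod_nil, hM, mul_one]
      have hfun : (fun k : Fin n => A (i + (n : ℤ) - ((k.castSucc : Fin (n + 1)) : ℕ)))
          = fun k : Fin n => A (i + 1 + (n : ℤ) - 1 - (k : ℕ)) := by
        funext k
        congr 1
        push_cast [Fin.coe_castSucc]
        ring
      rw [hfun]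
      congr 2
      push_cast [Fin.val_last]
      ring
    rw [← h1, ← h2]
  set D : Matrix (Fin 3) (Fin 3) R := !![-1, 0, 0; 0, -1, 0; 0, 0, 1] with hD
  have fwd : ∀ i : ℤ, M i = D → M (i + 1) = D := by
    intro i hi
    calc M (i + 1) = M (i + 1) * (A i * !![a i, -1, -β i; 1, 0, 0; -β i, 0, 1]) := by
          rw [hAB, mul_one]
    _ = (M (i + 1) * A i) * !![a i, -1, -β i; 1, 0, 0; -β i, 0, 1] := by rw [mul_assoc]
    _ = (A (i + n) * M i) * !![a i, -1, -β i; 1, 0, 0; -β i, 0, 1] := by rw [hstep]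
    _ = (A (i + n) * D) * !![a i, -1, -β i; 1, 0, 0; -β i, 0, 1] := by rw [hi]
    _ = D * (A i * !![a i, -1, -β i; 1, 0, 0; -β i, 0, 1]) := by rw [hAD i, mul_assoc]
    _ = D := by rw [hAB, mul_one]
  have bwd : ∀ i : ℤ, M (i + 1) = D → M i = D := by
    intro i hi
    calc M i = (!![a (i + n), -1, -β (i + n); 1, 0, 0; -β (i + n), 0, 1] * A (i + n))
          * M i := by rw [hBA, one_mul]
    _ = !![a (i + n), -1, -β (i + n); 1, 0, 0; -β (i + n), 0, 1]
          * (A (i + n) * M i) := by rw [mul_assoc]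
    _ = !![a (i + n), -1, -β (i + n); 1, 0, 0; -β (i + n), 0, 1]
          * (M (i + 1) * A i) := by rw [hstep]
    _ = !![a (i + n), -1, -β (i + n); 1, 0, 0; -β (i + n), 0, 1] * (D * A i) := by rw [hi]
    _ = (!![a (i + n), -1, -β (i + n); 1, 0, 0; -β (i + n), 0, 1] * A (i + n)) * D := by
          rw [← hAD i, mul_assoc]
    _ = D := by rw [hBA, one_mul]
  have key : ∀ k : ℤ, M (i₀ + k) = D := by
    intro k
    induction k using Int.induction_on with
    | zero => simpa using h
    | succ m ih =>
        rw [show i₀ + ((m : ℤ) + 1) = (i₀ + m) + 1 by ring]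
        exact fwd _ ih
    | pred m ih =>
        refine bwd _ ?_
        rw [show i₀ + (-(m : ℤ) - 1) + 1 = i₀ + -(m : ℤ) by ring]
        exact ih
  intro j
  have := key (j - i₀)
  rwa [show i₀ + (j - i₀) = j by ring] at this
end
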